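/- For every set A ∈ 𝒜₄ there exist k ∈ {0,1,2} and an isometry g of ℝ⁴ mapping the cube [0,1]⁴ onto itself, such that the set A ∪ g(I_k) can be covered by 8 boxes from 𝒫₄, where I_k denotes the line segment joining the points (1/4, k/4, 0, 0) and (3/4, k/4, 0, 0). -/

import Mathlib

open scoped BigOperators

/-- `S` is a box of the family `𝒫ₙ`: an axis-parallel parallelotope
`∏ᵢ [xᵢ, xᵢ + δᵢ]` with `δᵢ ≥ 0` and `∑ᵢ δᵢ < 1`. -/
def IsBoxP (n : ℕ) (S : Set (EuclideanSpace ℝ (Fin n))) : Prop :=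
  ∃ x δ : Fin n → ℝ, (∀ i, 0 ≤ δ i) ∧ (∑ i, δ i) < 1 ∧
    S = {p : EuclideanSpace ℝ (Fin n) | ∀ i, p i ∈ Set.Icc (x i) (x i + δ i)}

/-- The `(n-2)`-skeleton `B_{n-2,n}` of the unit cube `[0,1]ⁿ`: points of the cube
having at least two coordinates equal to `0` or `1`. -/
def skeletonTwo (n : ℕ) : Set (EuclideanSpace ℝ (Fin n)) :=
  {p | (∀ i, p i ∈ Set.Icc (0 : ℝ) 1) ∧
    ∃ i j : Fin n, i ≠ j ∧ (p i = 0 ∨ p i = 1) ∧ (p j = 0 ∨ p j = 1)}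

/-- `A` belongs to the family `𝒜ₙ`: `A = ⋃ᵢ {xᵢ, xᵢ + eᵢ}` where `xᵢ` and `xᵢ + eᵢ`
lie in the unit cube `[0,1]ⁿ`. -/
def MemA (n : ℕ) (A : Set (EuclideanSpace ℝ (Fin n))) : Prop :=
  ∃ x : Fin n → EuclideanSpace ℝ (Fin n),
    (∀ i, (∀ j, x i j ∈ Set.Icc (0 : ℝ) 1) ∧
      (∀ j, (x i + EuclideanSpace.single i 1 : EuclideanSpace ℝ (Fin n)) j ∈ Set.Icc (0 : ℝ) 1)) ∧
    A = ⋃ i, ({x i, x i + EuclideanSpace.single i 1} : Set (EuclideanSpace ℝ (Fin n)))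

/-- The unit cube `[0,1]⁴` in `ℝ⁴`. -/
def unitCube : Set (EuclideanSpace ℝ (Fin 4)) :=
  {p | ∀ i, p i ∈ Set.Icc (0 : ℝ) 1}

/-- The point `(a, b, 0, 0)` of `ℝ⁴`. -/
noncomputable def pt (a b : ℝ) : EuclideanSpace ℝ (Fin 4) :=
  (WithLp.equiv 2 (Fin 4 → ℝ)).symm ![a, b, 0, 0]





abbrev E4 := EuclideanSpace ℝ (Fin 4)

noncomputable def gmap (π : Equiv.Perm (Fin 4)) (ε : Fin 4 → Bool) (y : E4) : E4 :=
  WithLp.toLp 2 (fun i => if ε i then 1 - y (π i) else y (π i))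

def boxSet (lo hi : Fin 4 → ℝ) : Set E4 := {p | ∀ i, p i ∈ Set.Icc (lo i) (hi i)}

noncomputable def fd (v : ℝ) : ℝ := min v (1 - v)
lemma gmap_isometry (π : Equiv.Perm (Fin 4)) (ε : Fin 4 → Bool) : Isometry (gmap π ε) := by
  apply Isometry.of_dist_eq
  intro a b
  rw [EuclideanSpace.dist_eq, EuclideanSpace.dist_eq]
  congr 1
  rw [← Equiv.sum_comp π (fun j => dist (a j) (b j) ^ 2)]
  apply Finset.sum_congr rfl
  intro i _
  simp only [gmap, PiLp.toLp_apply, Real.dist_eq]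
  cases h : ε i
  · simp
  · simp only [if_true]
    rw [show (1:ℝ) - a (π i) - (1 - b (π i)) = -(a (π i) - b (π i)) by ring, abs_neg]

lemma gmap_cube (π : Equiv.Perm (Fin 4)) (ε : Fin 4 → Bool) :
    gmap π ε '' unitCube = unitCube := by
  ext p
  constructor
  · rintro ⟨y, hy, rfl⟩ i
    have := hy (π i)
    simp only [Set.mem_Icc] at this
    simp only [gmap, PiLp.toLp_apply]
    cases ε i <;> simp only [if_true, if_false, Bool.false_eq_true] <;>
      exact ⟨by linarith [this.1, this.2], by linarith [this.1, this.2]⟩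
  · intro hp
    refine ⟨WithLp.toLp 2 (fun i => if ε (π.symm i) then 1 - p (π.symm i) else p (π.symm i)), ?_, ?_⟩
    · intro i
      have := hp (π.symm i)
      simp only [Set.mem_Icc, PiLp.toLp_apply] at this ⊢
      cases ε (π.symm i) <;> simp only [if_true, if_false, Bool.false_eq_true] <;>
        exact ⟨by linarith [this.1, this.2], by linarith [this.1, this.2]⟩
    · ext i
      simp only [gmap, PiLp.toLp_apply, Equiv.symm_apply_apply]
      cases ε i <;> simp <;> rw [Equiv.symm_apply_apply]

lemma seg_coords {κ : ℝ} {z : E4} (hz : z ∈ segment ℝ (pt (1/4) κ) (pt (3/4) κ)) :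
    (1/4 ≤ z 0 ∧ z 0 ≤ 3/4) ∧ z 1 = κ ∧ z 2 = 0 ∧ z 3 = 0 := by
  obtain ⟨a, b, ha, hb, hab, rfl⟩ := hz
  refine ⟨⟨?_, ?_⟩, ?_, ?_, ?_⟩ <;>
    simp only [pt, PiLp.add_apply, PiLp.smul_apply, smul_eq_mul,
      WithLp.equiv_symm_apply, PiLp.toLp_apply, Matrix.cons_val_zero, Matrix.cons_val_one, Matrix.head_cons,
      Matrix.cons_val_two, Matrix.cons_val_three, Matrix.tail_cons] <;>
    first
    | nlinarith
    | linear_combination κ * hab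

lemma isBoxP_boxSet (lo hi : Fin 4 → ℝ) (h : ∀ i, lo i ≤ hi i)
    (hs : ∑ i, (hi i - lo i) < 1) : IsBoxP 4 (boxSet lo hi) := by
  refine ⟨lo, fun i => hi i - lo i, fun i => sub_nonneg.mpr (h i), hs, ?_⟩
  unfold boxSet
  norm_num

lemma isBoxP_singleton (q : E4) : IsBoxP 4 {q} := by
  refine ⟨fun i => q i, fun _ => 0, fun _ => le_refl _, by norm_num, ?_⟩
  ext p
  simp only [Set.mem_singleton_iff, Set.mem_setOf_eq, add_zero, Set.mem_Icc]
  constructor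
  · rintro rfl i; exact ⟨le_refl _, le_refl _⟩
  · intro h; ext i; exact le_antisymm ((h i).2) ((h i).1)


/-- cost of assignment: axis fold u, height fold v, zero fold w -/
def Tcost (u v w κ : ℝ) : Prop := max 0 (1/4 - u) + |v - κ| + w < 1/2

lemma near (v : ℝ) (h0 : 0 ≤ v) (h1 : v ≤ 1/2) :
    ∃ κ : ℝ, (κ = 0 ∨ κ = 1/4 ∨ κ = 1/2) ∧ |v - κ| ≤ 1/8 := by
  rcases le_total v (1/8) with h | h
  · exact ⟨0, Or.inl rfl, by rw [abs_le]; constructor <;> linarith⟩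
  rcases le_total v (3/8) with h' | h'
  · exact ⟨1/4, Or.inr (Or.inl rfl), by rw [abs_le]; constructor <;> linarith⟩
  · exact ⟨1/2, Or.inr (Or.inr rfl), by rw [abs_le]; constructor <;> linarith⟩

lemma dich (a b c : ℝ) (ha : 0 ≤ a ∧ a ≤ 1/2) (hb : 0 ≤ b ∧ b ≤ 1/2) (hc : 0 ≤ c ∧ c ≤ 1/2) :
    (∃ κ : ℝ, (κ = 0 ∨ κ = 1/4 ∨ κ = 1/2) ∧
      (Tcost a b c κ ∨ Tcost a c b κ ∨ Tcost b a c κ ∨ Tcost b c a κ ∨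
       Tcost c a b κ ∨ Tcost c b a κ)) ∨ (3/8 ≤ b ∧ a ≤ c) := by
  by_cases hG : ∃ κ : ℝ, (κ = 0 ∨ κ = 1/4 ∨ κ = 1/2) ∧
      (Tcost a b c κ ∨ Tcost a c b κ ∨ Tcost b a c κ ∨ Tcost b c a κ ∨
       Tcost c a b κ ∨ Tcost c b a κ)
  · exact Or.inl hG
  right
  push_neg at hG
  have key : ∀ κ : ℝ, (κ = 0 ∨ κ = 1/4 ∨ κ = 1/2) →
      ¬Tcost a b c κ ∧ ¬Tcost a c b κ ∧ ¬Tcost b a c κ ∧ ¬Tcost b c a κ ∧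
      ¬Tcost c a b κ ∧ ¬Tcost c b a κ := by
    intro κ hκ
    have := hG κ hκ
    tauto
  have ge_of_not : ∀ u v w κ : ℝ, ¬Tcost u v w κ → 1/2 ≤ max 0 (1/4 - u) + |v - κ| + w := by
    intro u v w κ h
    exact le_of_not_gt h
  -- step 1 : ¬ (a < 1/4 ∧ c < 1/4)
  have step1 : ¬(a < 1/4 ∧ c < 1/4) := by
    rintro ⟨ha4, hc4⟩
    obtain ⟨κ, hκ, hκb⟩ := near b hb.1 hb.2
    have i1 := ge_of_not _ _ _ _ (key κ hκ).1
    have i2 := ge_of_not _ _ _ _ (key κ hκ).2.2.2.2.2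
    rw [max_eq_right (by linarith : (0:ℝ) ≤ 1/4 - a)] at i1
    rw [max_eq_right (by linarith : (0:ℝ) ≤ 1/4 - c)] at i2
    linarith
  -- step 2 : 3/8 ≤ b
  have hb38 : 3/8 ≤ b := by
    rcases le_or_gt (1/4) a with h | h
    · obtain ⟨κ, hκ, hκc⟩ := near c hc.1 hc.2
      have i1 := ge_of_not _ _ _ _ (key κ hκ).2.1
      rw [max_eq_left (by linarith : 1/4 - a ≤ (0:ℝ))] at i1
      linarith
    · have hc4 : 1/4 ≤ c := by
        by_contra h'
        exact step1 ⟨h, by linarith⟩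
      obtain ⟨κ, hκ, hκa⟩ := near a ha.1 ha.2
      have i1 := ge_of_not _ _ _ _ (key κ hκ).2.2.2.2.1
      rw [max_eq_left (by linarith : 1/4 - c ≤ (0:ℝ))] at i1
      linarith
  refine ⟨hb38, ?_⟩
  -- step 3 : a ≤ c  (use T b a c with κ = 1/2)
  have i1 := ge_of_not _ _ _ _ (key (1/2) (Or.inr (Or.inr rfl))).2.2.1
  rw [max_eq_left (by linarith : 1/4 - b ≤ (0:ℝ))] at i1
  rw [abs_of_nonpos (by linarith : a - 1/2 ≤ 0)] at i1
  linarith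

lemma fd_bounds {v : ℝ} (h0 : 0 ≤ v) (h1 : v ≤ 1) : 0 ≤ fd v ∧ fd v ≤ 1/2 := by
  unfold fd
  simp only [min_def]
  split_ifs <;> constructor <;> linarith

lemma termA {v : ℝ} (h0 : 0 ≤ v) (h1 : v ≤ 1) :
    max (3/4) v - min (1/4) v ≤ 1/2 + max 0 (1/4 - fd v) := by
  unfold fd
  simp only [min_def, max_def]
  split_ifs <;> linarith

lemma termH {v κ : ℝ} (h0 : 0 ≤ v) (h1 : v ≤ 1) (b : Bool) (hb : b = decide (1/2 < v)) :
    max (if b then 1 - κ else κ) v - min (if b then 1 - κ else κ) v ≤ |fd v - κ| := by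
  subst hb
  unfold fd
  by_cases h : 1/2 < v
  · have hd : decide (1/2 < v) = true := decide_eq_true h
    rw [hd]
    have h1' : min v (1-v) = 1 - v := min_eq_right (by linarith)
    rw [h1']
    have a1 := le_abs_self ((1-v) - κ)
    have a2 := neg_abs_le ((1-v) - κ)
    simp only [if_true, min_def, max_def]
    split_ifs <;> linarith
  · have hd : decide (1/2 < v) = false := decide_eq_false h
    rw [hd]
    push_neg at h
    have h1' : min v (1-v) = v := min_eq_left (by linarith)
    rw [h1']
    have a1 := le_abs_self (v - κ)
    have a2 := neg_abs_le (v - κ)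
    simp only [if_false, Bool.false_eq_true, min_def, max_def]
    split_ifs <;> linarith

lemma termZ {v : ℝ} (h0 : 0 ≤ v) (h1 : v ≤ 1) (b : Bool) (hb : b = decide (1/2 < v)) :
    max (if b then (1:ℝ) else 0) v - min (if b then (1:ℝ) else 0) v ≤ fd v := by
  subst hb
  unfold fd
  by_cases h : 1/2 < v
  · have hd : decide (1/2 < v) = true := decide_eq_true h
    rw [hd]
    simp only [if_true, min_def, max_def]
    split_ifs <;> linarith
  · have hd : decide (1/2 < v) = false := decide_eq_false h
    rw [hd]
    push_neg at h
    simp only [if_false, Bool.false_eq_true, min_def, max_def]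
    split_ifs <;> linarith

lemma master (A : Set E4) (x : Fin 4 → E4)
    (hAeq : A = ⋃ i, ({x i, x i + EuclideanSpace.single i 1} : Set E4))
    (k : Fin 3) (π : Equiv.Perm (Fin 4)) (ε : Fin 4 → Bool)
    (lo hi lo' hi' : Fin 4 → ℝ) (p₁ p₂ : E4)
    (h1 : ∀ i, lo i ≤ hi i) (h1s : ∑ i, (hi i - lo i) < 1)
    (h2 : ∀ i, lo' i ≤ hi' i) (h2s : ∑ i, (hi' i - lo' i) < 1)
    (hp0 : ({x 0, x 0 + EuclideanSpace.single 0 1} : Set E4) ⊆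
      boxSet lo hi ∪ boxSet lo' hi' ∪ {p₁})
    (hp1 : ({x 1, x 1 + EuclideanSpace.single 1 1} : Set E4) ⊆
      boxSet lo hi ∪ boxSet lo' hi' ∪ {p₂})
    (hcov : ∀ z ∈ segment ℝ (pt (1/4) ((k : ℝ)/4)) (pt (3/4) ((k : ℝ)/4)),
      gmap π ε z ∈ boxSet lo hi ∪ boxSet lo' hi') :
    ∃ k : Fin 3, ∃ g : E4 → E4,
      Isometry g ∧ g '' unitCube = unitCube ∧
      ∃ P : Fin 8 → Set E4,
        (∀ i, IsBoxP 4 (P i)) ∧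
        A ∪ g '' segment ℝ (pt (1/4) ((k : ℝ)/4)) (pt (3/4) ((k : ℝ)/4)) ⊆ ⋃ i, P i := by
  refine ⟨k, gmap π ε, gmap_isometry π ε, gmap_cube π ε,
    ![boxSet lo hi, boxSet lo' hi', {p₁}, {p₂}, {x 2}, {x 2 + EuclideanSpace.single 2 1},
      {x 3}, {x 3 + EuclideanSpace.single 3 1}], ?_, ?_⟩
  · intro i
    fin_cases i
    · exact isBoxP_boxSet lo hi h1 h1s
    · exact isBoxP_boxSet lo' hi' h2 h2s
    all_goals apply isBoxP_singleton
  · rintro p (hpA | hpS)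
    · rw [hAeq] at hpA
      rw [Set.mem_iUnion] at hpA
      obtain ⟨i, hi⟩ := hpA
      rw [Set.mem_iUnion]
      fin_cases i
      · rcases hp0 hi with (h | h) | h
        · exact ⟨0, h⟩
        · exact ⟨1, h⟩
        · exact ⟨2, h⟩
      · rcases hp1 hi with (h | h) | h
        · exact ⟨0, h⟩
        · exact ⟨1, h⟩
        · exact ⟨3, h⟩
      · rcases hi with h | h
        · exact ⟨4, h⟩
        · exact ⟨5, h⟩
      · rcases hi with h | h
        · exact ⟨6, h⟩
        · exact ⟨7, h⟩
    · obtain ⟨z, hz, rfl⟩ := hpS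
      rw [Set.mem_iUnion]
      rcases hcov z hz with h | h
      · exact ⟨0, h⟩
      · exact ⟨1, h⟩

lemma constr1 (A : Set E4) (x : Fin 4 → E4)
    (hAeq : A = ⋃ i, ({x i, x i + EuclideanSpace.single i 1} : Set E4))
    (hx01 : ∀ i j, 0 ≤ x i j ∧ x i j ≤ 1)
    (hz : ∀ i, x i i = 0)
    (i0 j1 j2 j3 : Fin 4) (π : Equiv.Perm (Fin 4))
    (hπ0 : π i0 = 3) (hπ1 : π j1 = 0) (hπ2 : π j2 = 1) (hπ3 : π j3 = 2)
    (hall : ∀ i : Fin 4, i = i0 ∨ i = j1 ∨ i = j2 ∨ i = j3)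
    (k : Fin 3)
    (hT : max 0 (1/4 - fd (x i0 j1)) + |fd (x i0 j2) - (k:ℝ)/4| + fd (x i0 j3) < 1/2)
    (hi0 : i0 = 0 ∨ i0 = 1) :
    ∃ k : Fin 3, ∃ g : E4 → E4,
      Isometry g ∧ g '' unitCube = unitCube ∧
      ∃ P : Fin 8 → Set E4,
        (∀ i, IsBoxP 4 (P i)) ∧
        A ∪ g '' segment ℝ (pt (1/4) ((k : ℝ)/4)) (pt (3/4) ((k : ℝ)/4)) ⊆ ⋃ i, P i := by
  set κ : ℝ := (k:ℝ)/4 with hκdef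
  have hκ0 : 0 ≤ κ := by positivity
  have hκh : κ ≤ 1/2 := by
    have h1 : (k:ℕ) ≤ 2 := Nat.lt_succ_iff.mp k.isLt
    have h2 : ((k:ℕ):ℝ) ≤ 2 := by exact_mod_cast h1
    rw [hκdef]; linarith
  set ε : Fin 4 → Bool := fun i => decide (1/2 < x i0 i) with hε
  set sPt : Fin 4 → ℝ := fun i =>
    if π i = 1 then (if ε i then 1-κ else κ) else (if ε i then (1:ℝ) else 0) with hsPt
  set sLo : Fin 4 → ℝ := fun i => if π i = 0 then (1/4:ℝ) else sPt i with hsLo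
  set sHi : Fin 4 → ℝ := fun i => if π i = 0 then (3/4:ℝ) else sPt i with hsHi
  set lo : Fin 4 → ℝ := fun i => min (sLo i) (x i0 i) with hlo
  set hi : Fin 4 → ℝ := fun i => max (sHi i) (x i0 i) with hhi
  have hεi0 : ε i0 = false := by
    rw [hε]; simp only [hz i0]; norm_num
  have vi0Lo : sLo i0 = 0 := by simp [hsLo, hsPt, hπ0, hεi0]
  have vi0Hi : sHi i0 = 0 := by simp [hsHi, hsPt, hπ0, hεi0]
  have vj1Lo : sLo j1 = 1/4 := by simp [hsLo, hπ1]
  have vj1Hi : sHi j1 = 3/4 := by simp [hsHi, hπ1]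
  have vj2Pt : sPt j2 = if ε j2 then 1-κ else κ := by simp [hsPt, hπ2]
  have vj2Lo : sLo j2 = sPt j2 := by simp [hsLo, hπ2]
  have vj2Hi : sHi j2 = sPt j2 := by simp [hsHi, hπ2]
  have vj3Pt : sPt j3 = if ε j3 then (1:ℝ) else 0 := by simp [hsPt, hπ3]
  have vj3Lo : sLo j3 = sPt j3 := by simp [hsLo, hπ3]
  have vj3Hi : sHi j3 = sPt j3 := by simp [hsHi, hπ3]
  -- symm values
  have e0 : π.symm 0 = j1 := by rw [Equiv.symm_apply_eq]; exact hπ1.symm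
  have e1 : π.symm 1 = j2 := by rw [Equiv.symm_apply_eq]; exact hπ2.symm
  have e2 : π.symm 2 = j3 := by rw [Equiv.symm_apply_eq]; exact hπ3.symm
  have e3 : π.symm 3 = i0 := by rw [Equiv.symm_apply_eq]; exact hπ0.symm
  -- box bounds
  have hbd : ∀ i, lo i ≤ hi i := fun i =>
    le_trans (min_le_right _ _) (le_max_right _ _)
  -- sum bound
  have hsum : ∑ i, (hi i - lo i) < 1 := by
    have hre : ∑ i, (hi i - lo i) = ∑ s, (hi (π.symm s) - lo (π.symm s)) :=
      (Equiv.sum_comp π.symm (fun i => hi i - lo i)).symm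
    rw [hre, Fin.sum_univ_four, e0, e1, e2, e3]
    have t0 : hi i0 - lo i0 = 0 := by
      rw [hlo, hhi]; simp only [vi0Lo, vi0Hi, hz i0]; norm_num
    have t1 : hi j1 - lo j1 ≤ 1/2 + max 0 (1/4 - fd (x i0 j1)) := by
      rw [hlo, hhi]; simp only [vj1Lo, vj1Hi]
      have := termA (hx01 i0 j1).1 (hx01 i0 j1).2
      linarith [this]
    have t2 : hi j2 - lo j2 ≤ |fd (x i0 j2) - κ| := by
      rw [hlo, hhi]; simp only [vj2Lo, vj2Hi, vj2Pt]
      have := termH (κ := κ) (hx01 i0 j2).1 (hx01 i0 j2).2 (ε j2) rfl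
      linarith [this]
    have t3 : hi j3 - lo j3 ≤ fd (x i0 j3) := by
      rw [hlo, hhi]; simp only [vj3Lo, vj3Hi, vj3Pt]
      have := termZ (hx01 i0 j3).1 (hx01 i0 j3).2 (ε j3) rfl
      linarith [this]
    linarith
  -- the point q := x i0 lies in the box
  have hq : x i0 ∈ boxSet lo hi := by
    intro i
    exact ⟨min_le_right _ _, le_max_right _ _⟩
  -- segment covering
  have hcov : ∀ z ∈ segment ℝ (pt (1/4) κ) (pt (3/4) κ), gmap π ε z ∈ boxSet lo hi := by
    intro z hzz
    obtain ⟨⟨hz0a, hz0b⟩, hz1, hz2, hz3⟩ := seg_coords hzz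
    intro i
    have hgi : ∀ j, gmap π ε z j = if ε j then 1 - z (π j) else z (π j) := fun _ => rfl
    rcases hall i with h | h | h | h <;> rw [h]
    · -- i = i0
      rw [hgi, hπ0, hz3, hεi0]
      simp only [Bool.false_eq_true, if_false]
      constructor
      · rw [hlo]; simp only [vi0Lo, hz i0]; norm_num
      · rw [hhi]; simp only [vi0Hi, hz i0]; norm_num
    · -- j1 : axis
      rw [hgi, hπ1]
      constructor
      · rw [hlo]; simp only [vj1Lo]
        refine le_trans (min_le_left _ _) ?_
        cases hb : ε j1 <;> simp only [if_true, if_false, Bool.false_eq_true] <;> linarith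
      · rw [hhi]; simp only [vj1Hi]
        refine le_trans ?_ (le_max_left _ _)
        cases hb : ε j1 <;> simp only [if_true, if_false, Bool.false_eq_true] <;> linarith
    · -- j2 : height
      rw [hgi, hπ2, hz1]
      have hval : (if ε j2 then 1 - κ else κ) = sPt j2 := (vj2Pt).symm
      constructor
      · rw [hlo]; simp only [vj2Lo]
        refine le_trans (min_le_left _ _) (le_of_eq ?_)
        rw [← hval]
      · rw [hhi]; simp only [vj2Hi]
        refine le_trans (le_of_eq ?_) (le_max_left _ _)
        rw [← hval]
    · -- j3 : zero
      rw [hgi, hπ3, hz2]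
      have hval : (if ε j3 then 1 - (0:ℝ) else 0) = sPt j3 := by
        rw [vj3Pt]; cases ε j3 <;> norm_num
      constructor
      · rw [hlo]; simp only [vj3Lo]
        refine le_trans (min_le_left _ _) (le_of_eq ?_)
        rw [← hval]
      · rw [hhi]; simp only [vj3Hi]
        refine le_trans (le_of_eq ?_) (le_max_left _ _)
        rw [← hval]
  -- now apply master
  rcases hi0 with rfl | rfl
  · exact master A x hAeq k π ε lo hi (fun i => x 1 i) (fun i => x 1 i)
      (x 0 + EuclideanSpace.single 0 1) (x 1 + EuclideanSpace.single 1 1)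
      hbd hsum (fun i => le_refl _) (by simp)
      (by
        rintro p (rfl | rfl)
        · exact Or.inl (Or.inl hq)
        · exact Or.inr rfl)
      (by
        rintro p (rfl | rfl)
        · exact Or.inl (Or.inr (fun i => ⟨le_refl _, le_refl _⟩))
        · exact Or.inr rfl)
      (fun z hzz => Or.inl (hcov z hzz))
  · exact master A x hAeq k π ε lo hi (fun i => x 0 i) (fun i => x 0 i)
      (x 0 + EuclideanSpace.single 0 1) (x 1 + EuclideanSpace.single 1 1)
      hbd hsum (fun i => le_refl _) (by simp)
      (by
        rintro p (rfl | rfl)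
        · exact Or.inl (Or.inr (fun i => ⟨le_refl _, le_refl _⟩))
        · exact Or.inr rfl)
      (by
        rintro p (rfl | rfl)
        · exact Or.inl (Or.inl hq)
        · exact Or.inr rfl)
      (fun z hzz => Or.inl (hcov z hzz))

lemma termM {v : ℝ} (h0 : 0 ≤ v) (h1 : v ≤ 1) :
    max (1/2) v - min (1/2) v ≤ 1/2 - fd v := by
  unfold fd
  simp only [min_def, max_def]
  split_ifs <;> linarith

def π2 : Equiv.Perm (Fin 4) := ⟨![2,3,0,1], ![2,3,0,1], by decide, by decide⟩

lemma constr2 (A : Set E4) (x : Fin 4 → E4)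
    (hAeq : A = ⋃ i, ({x i, x i + EuclideanSpace.single i 1} : Set E4))
    (hx01 : ∀ i j, 0 ≤ x i j ∧ x i j ≤ 1)
    (hz : ∀ i, x i i = 0)
    (pa : ∀ (i j : Fin 4), (x i + EuclideanSpace.single i 1 : E4) j
      = x i j + (if j = i then 1 else 0))
    (F0a : 3/8 ≤ fd (x 0 2)) (F0b : fd (x 0 1) ≤ fd (x 0 3))
    (F1a : 3/8 ≤ fd (x 1 2)) (F1b : fd (x 1 0) ≤ fd (x 1 3)) :
    ∃ k : Fin 3, ∃ g : E4 → E4,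
      Isometry g ∧ g '' unitCube = unitCube ∧
      ∃ P : Fin 8 → Set E4,
        (∀ i, IsBoxP 4 (P i)) ∧
        A ∪ g '' segment ℝ (pt (1/4) ((k : ℝ)/4)) (pt (3/4) ((k : ℝ)/4)) ⊆ ⋃ i, P i := by
  have hκ : (((2:Fin 3) : ℝ))/4 = 1/2 := by norm_num
  set ε : Fin 4 → Bool :=
    ![decide (1/2 < x 1 0), decide (1/2 < x 0 1), false, false] with hε
  set c₀ : ℝ := if ε 0 then 1 else 0 with hc₀
  set c₁ : ℝ := if ε 1 then 1 else 0 with hc₁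
  set lo : Fin 4 → ℝ := ![c₀, min c₁ (x 0 1), 1/4, min (1/2) (x 0 3)] with hlo
  set hi : Fin 4 → ℝ := ![c₀, max c₁ (x 0 1), max (1/2) (x 0 2), max (1/2) (x 0 3)] with hhi
  set lo' : Fin 4 → ℝ := ![min c₀ (x 1 0), c₁, min (1/2) (x 1 2), min (1/2) (x 1 3)] with hlo'
  set hi' : Fin 4 → ℝ := ![max c₀ (x 1 0), c₁, 3/4, max (1/2) (x 1 3)] with hhi'
  have b01 := hx01 0 1
  have b02 := hx01 0 2
  have b03 := hx01 0 3
  have b10 := hx01 1 0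
  have b12 := hx01 1 2
  have b13 := hx01 1 3
  have fda : fd (x 0 2) ≤ x 0 2 := min_le_left _ _
  have fdb : fd (x 0 2) ≤ 1 - x 0 2 := min_le_right _ _
  have fdc : fd (x 1 2) ≤ x 1 2 := min_le_left _ _
  have fdd : fd (x 1 2) ≤ 1 - x 1 2 := min_le_right _ _
  -- chosen points
  set q1 : E4 := if ε 0 then x 0 + EuclideanSpace.single 0 1 else x 0 with hq1def
  set p1 : E4 := if ε 0 then x 0 else x 0 + EuclideanSpace.single 0 1 with hp1def
  set q2 : E4 := if ε 1 then x 1 + EuclideanSpace.single 1 1 else x 1 with hq2def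
  set p2 : E4 := if ε 1 then x 1 else x 1 + EuclideanSpace.single 1 1 with hp2def
  have q1c0 : q1 0 = c₀ := by
    rw [hq1def, hc₀]
    cases hb : ε 0 <;> simp only [if_true, if_false, Bool.false_eq_true]
    · exact hz 0
    · rw [pa 0 0, hz 0]; norm_num
  have q1c : ∀ j : Fin 4, j ≠ 0 → q1 j = x 0 j := by
    intro j hj
    rw [hq1def]
    cases hb : ε 0 <;> simp only [if_true, if_false, Bool.false_eq_true]
    rw [pa 0 j, if_neg hj]; norm_num
  have q2c1 : q2 1 = c₁ := by
    rw [hq2def, hc₁]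
    cases hb : ε 1 <;> simp only [if_true, if_false, Bool.false_eq_true]
    · exact hz 1
    · rw [pa 1 1, hz 1]; norm_num
  have q2c : ∀ j : Fin 4, j ≠ 1 → q2 j = x 1 j := by
    intro j hj
    rw [hq2def]
    cases hb : ε 1 <;> simp only [if_true, if_false, Bool.false_eq_true]
    rw [pa 1 j, if_neg hj]; norm_num
  -- memberships
  have hq1mem : q1 ∈ boxSet lo hi := by
    intro i
    fin_cases i
    · show c₀ ≤ q1 0 ∧ q1 0 ≤ c₀
      rw [q1c0]; exact ⟨le_refl _, le_refl _⟩
    · show min c₁ (x 0 1) ≤ q1 1 ∧ q1 1 ≤ max c₁ (x 0 1)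
      rw [q1c 1 (by decide)]
      exact ⟨min_le_right _ _, le_max_right _ _⟩
    · show 1/4 ≤ q1 2 ∧ q1 2 ≤ max (1/2) (x 0 2)
      rw [q1c 2 (by decide)]
      exact ⟨by linarith, le_max_right _ _⟩
    · show min (1/2) (x 0 3) ≤ q1 3 ∧ q1 3 ≤ max (1/2) (x 0 3)
      rw [q1c 3 (by decide)]
      exact ⟨min_le_right _ _, le_max_right _ _⟩
  have hq2mem : q2 ∈ boxSet lo' hi' := by
    intro i
    fin_cases i
    · show min c₀ (x 1 0) ≤ q2 0 ∧ q2 0 ≤ max c₀ (x 1 0)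
      rw [q2c 0 (by decide)]
      exact ⟨min_le_right _ _, le_max_right _ _⟩
    · show c₁ ≤ q2 1 ∧ q2 1 ≤ c₁
      rw [q2c1]; exact ⟨le_refl _, le_refl _⟩
    · show min (1/2) (x 1 2) ≤ q2 2 ∧ q2 2 ≤ 3/4
      rw [q2c 2 (by decide)]
      exact ⟨min_le_right _ _, by linarith⟩
    · show min (1/2) (x 1 3) ≤ q2 3 ∧ q2 3 ≤ max (1/2) (x 1 3)
      rw [q2c 3 (by decide)]
      exact ⟨min_le_right _ _, le_max_right _ _⟩
  -- sums
  have hsum : ∑ i, (hi i - lo i) < 1 := by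
    rw [Fin.sum_univ_four]
    rw [show hi 0 = c₀ from rfl, show lo 0 = c₀ from rfl,
      show hi 1 = max c₁ (x 0 1) from rfl, show lo 1 = min c₁ (x 0 1) from rfl,
      show hi 2 = max (1/2) (x 0 2) from rfl, show lo 2 = 1/4 from rfl,
      show hi 3 = max (1/2) (x 0 3) from rfl, show lo 3 = min (1/2) (x 0 3) from rfl]
    have t1 : max c₁ (x 0 1) - min c₁ (x 0 1) ≤ fd (x 0 1) := by
      rw [hc₁]
      exact termZ b01.1 b01.2 (ε 1) (by rw [hε]; rfl)
    have t2 : max (1/2) (x 0 2) ≤ 5/8 := max_le (by norm_num) (by linarith)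
    have t3 := termM b03.1 b03.2
    have hf3 := fd_bounds b03.1 b03.2
    linarith
  have hsum' : ∑ i, (hi' i - lo' i) < 1 := by
    rw [Fin.sum_univ_four]
    rw [show hi' 0 = max c₀ (x 1 0) from rfl, show lo' 0 = min c₀ (x 1 0) from rfl,
      show hi' 1 = c₁ from rfl, show lo' 1 = c₁ from rfl,
      show hi' 2 = 3/4 from rfl, show lo' 2 = min (1/2) (x 1 2) from rfl,
      show hi' 3 = max (1/2) (x 1 3) from rfl, show lo' 3 = min (1/2) (x 1 3) from rfl]
    have t1 : max c₀ (x 1 0) - min c₀ (x 1 0) ≤ fd (x 1 0) := by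
      rw [hc₀]
      exact termZ b10.1 b10.2 (ε 0) (by rw [hε]; rfl)
    have t2 : 3/8 ≤ min (1/2) (x 1 2) := le_min (by norm_num) (by linarith)
    have t3 := termM b13.1 b13.2
    have hf3 := fd_bounds b13.1 b13.2
    linarith
  have hbd : ∀ i, lo i ≤ hi i := by
    intro i
    fin_cases i
    · exact le_refl _
    · exact (min_le_right _ _).trans (le_max_right _ _)
    · show (1/4:ℝ) ≤ max (1/2) (x 0 2); exact le_max_of_le_left (by norm_num)
    · exact (min_le_right _ _).trans (le_max_right _ _)
  have hbd' : ∀ i, lo' i ≤ hi' i := by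
    intro i
    fin_cases i
    · exact (min_le_right _ _).trans (le_max_right _ _)
    · exact le_refl _
    · show min (1/2) (x 1 2) ≤ (3/4:ℝ); exact (min_le_left _ _).trans (by norm_num)
    · exact (min_le_right _ _).trans (le_max_right _ _)
  -- segment cover
  have hcov : ∀ z ∈ segment ℝ (pt (1/4) (((2:Fin 3):ℝ)/4)) (pt (3/4) (((2:Fin 3):ℝ)/4)),
      gmap π2 ε z ∈ boxSet lo hi ∪ boxSet lo' hi' := by
    intro z hzz
    rw [hκ] at hzz
    obtain ⟨⟨hz0a, hz0b⟩, hz1, hz2, hz3⟩ := seg_coords hzz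
    have hg0 : gmap π2 ε z 0 = c₀ := by
      show (if ε 0 then 1 - z (π2 0) else z (π2 0)) = c₀
      rw [show π2 0 = 2 from rfl, hz2, hc₀]
      cases ε 0 <;> norm_num
    have hg1 : gmap π2 ε z 1 = c₁ := by
      show (if ε 1 then 1 - z (π2 1) else z (π2 1)) = c₁
      rw [show π2 1 = 3 from rfl, hz3, hc₁]
      cases ε 1 <;> norm_num
    have hg2 : gmap π2 ε z 2 = z 0 := by
      show (if ε 2 then 1 - z (π2 2) else z (π2 2)) = z 0
      rw [show π2 2 = 0 from rfl, show ε 2 = false from rfl]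
      norm_num
    have hg3 : gmap π2 ε z 3 = 1/2 := by
      show (if ε 3 then 1 - z (π2 3) else z (π2 3)) = 1/2
      rw [show π2 3 = 1 from rfl, hz1, show ε 3 = false from rfl]
      norm_num
    rcases le_total (z 0) (1/2) with hcase | hcase
    · left
      intro i
      fin_cases i
      · show c₀ ≤ gmap π2 ε z 0 ∧ gmap π2 ε z 0 ≤ c₀
        rw [hg0]; exact ⟨le_refl _, le_refl _⟩
      · show min c₁ (x 0 1) ≤ gmap π2 ε z 1 ∧ gmap π2 ε z 1 ≤ max c₁ (x 0 1)
        rw [hg1]; exact ⟨min_le_left _ _, le_max_left _ _⟩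
      · show 1/4 ≤ gmap π2 ε z 2 ∧ gmap π2 ε z 2 ≤ max (1/2) (x 0 2)
        rw [hg2]; exact ⟨hz0a, le_max_of_le_left hcase⟩
      · show min (1/2) (x 0 3) ≤ gmap π2 ε z 3 ∧ gmap π2 ε z 3 ≤ max (1/2) (x 0 3)
        rw [hg3]; exact ⟨min_le_left _ _, le_max_left _ _⟩
    · right
      intro i
      fin_cases i
      · show min c₀ (x 1 0) ≤ gmap π2 ε z 0 ∧ gmap π2 ε z 0 ≤ max c₀ (x 1 0)
        rw [hg0]; exact ⟨min_le_left _ _, le_max_left _ _⟩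
      · show c₁ ≤ gmap π2 ε z 1 ∧ gmap π2 ε z 1 ≤ c₁
        rw [hg1]; exact ⟨le_refl _, le_refl _⟩
      · show min (1/2) (x 1 2) ≤ gmap π2 ε z 2 ∧ gmap π2 ε z 2 ≤ 3/4
        rw [hg2]; exact ⟨le_trans (min_le_left _ _) hcase, hz0b⟩
      · show min (1/2) (x 1 3) ≤ gmap π2 ε z 3 ∧ gmap π2 ε z 3 ≤ max (1/2) (x 1 3)
        rw [hg3]; exact ⟨min_le_left _ _, le_max_left _ _⟩
  -- pair memberships
  have hpair0 : ({x 0, x 0 + EuclideanSpace.single 0 1} : Set E4) ⊆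
      boxSet lo hi ∪ boxSet lo' hi' ∪ {p1} := by
    rintro p (rfl | rfl)
    · cases hb : ε 0
      · have e : q1 = x 0 := by rw [hq1def, hb]; simp
        exact Or.inl (Or.inl (e ▸ hq1mem))
      · have e : p1 = x 0 := by rw [hp1def, hb]; simp
        exact Or.inr e.symm
    · cases hb : ε 0
      · have e : p1 = x 0 + EuclideanSpace.single 0 1 := by rw [hp1def, hb]; simp
        exact Or.inr e.symm
      · have e : q1 = x 0 + EuclideanSpace.single 0 1 := by rw [hq1def, hb]; simp
        exact Or.inl (Or.inl (e ▸ hq1mem))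
  have hpair1 : ({x 1, x 1 + EuclideanSpace.single 1 1} : Set E4) ⊆
      boxSet lo hi ∪ boxSet lo' hi' ∪ {p2} := by
    rintro p (rfl | rfl)
    · cases hb : ε 1
      · have e : q2 = x 1 := by rw [hq2def, hb]; simp
        exact Or.inl (Or.inr (e ▸ hq2mem))
      · have e : p2 = x 1 := by rw [hp2def, hb]; simp
        exact Or.inr e.symm
    · cases hb : ε 1
      · have e : p2 = x 1 + EuclideanSpace.single 1 1 := by rw [hp2def, hb]; simp
        exact Or.inr e.symm
      · have e : q2 = x 1 + EuclideanSpace.single 1 1 := by rw [hq2def, hb]; simp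
        exact Or.inl (Or.inr (e ▸ hq2mem))
  exact master A x hAeq 2 π2 ε lo hi lo' hi' p1 p2 hbd hsum hbd' hsum' hpair0 hpair1 hcov

theorem segment_and_A_cover' (A : Set E4)
    (hA : ∃ x : Fin 4 → E4,
    (∀ i, (∀ j, x i j ∈ Set.Icc (0 : ℝ) 1) ∧
      (∀ j, (x i + EuclideanSpace.single i 1 : E4) j ∈ Set.Icc (0 : ℝ) 1)) ∧
    A = ⋃ i, ({x i, x i + EuclideanSpace.single i 1} : Set E4)) :
    ∃ k : Fin 3, ∃ g : E4 → E4,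
      Isometry g ∧ g '' unitCube = unitCube ∧
      ∃ P : Fin 8 → Set E4,
        (∀ i, IsBoxP 4 (P i)) ∧
        A ∪ g '' segment ℝ (pt (1/4) ((k : ℝ)/4)) (pt (3/4) ((k : ℝ)/4)) ⊆ ⋃ i, P i := by
  obtain ⟨x, hx, hAeq⟩ := hA
  have pa : ∀ (i j : Fin 4), (x i + EuclideanSpace.single i 1 : E4) j
      = x i j + (if j = i then 1 else 0) := by
    intro i j
    rw [PiLp.add_apply, EuclideanSpace.single_apply]
  have hx01 : ∀ i j, 0 ≤ x i j ∧ x i j ≤ 1 := fun i j => (hx i).1 j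
  have hz : ∀ i, x i i = 0 := by
    intro i
    have h1 := (hx i).2 i
    rw [pa i i, if_pos rfl] at h1
    have h2 := (hx i).1 i
    have := h1.2
    have := h2.1
    linarith
  have hfd : ∀ i j, 0 ≤ fd (x i j) ∧ fd (x i j) ≤ 1/2 :=
    fun i j => fd_bounds (hx01 i j).1 (hx01 i j).2
  have c0 : ((0:Fin 3):ℝ)/4 = 0 := by norm_num
  have c1 : ((1:Fin 3):ℝ)/4 = 1/4 := by norm_num
  have c2 : ((2:Fin 3):ℝ)/4 = 1/2 := by norm_num
  rcases dich (fd (x 0 1)) (fd (x 0 2)) (fd (x 0 3)) (hfd 0 1) (hfd 0 2) (hfd 0 3) with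
    ⟨κ, hκv, hTT⟩ | ⟨F0a, F0b⟩
  · -- good case for pair 0
    have getk : ∃ k : Fin 3, (k:ℝ)/4 = κ := by
      rcases hκv with rfl | rfl | rfl
      · exact ⟨0, c0⟩
      · exact ⟨1, c1⟩
      · exact ⟨2, c2⟩
    obtain ⟨k, hk⟩ := getk
    rcases hTT with h | h | h | h | h | h
    · exact constr1 A x hAeq hx01 hz 0 1 2 3 ⟨![3,0,1,2],![1,2,3,0],by decide,by decide⟩
        (by decide) (by decide) (by decide) (by decide) (by decide) k
        (by rw [hk]; exact h) (Or.inl rfl)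
    · exact constr1 A x hAeq hx01 hz 0 1 3 2 ⟨![3,0,2,1],![1,3,2,0],by decide,by decide⟩
        (by decide) (by decide) (by decide) (by decide) (by decide) k
        (by rw [hk]; exact h) (Or.inl rfl)
    · exact constr1 A x hAeq hx01 hz 0 2 1 3 ⟨![3,1,0,2],![2,1,3,0],by decide,by decide⟩
        (by decide) (by decide) (by decide) (by decide) (by decide) k
        (by rw [hk]; exact h) (Or.inl rfl)
    · exact constr1 A x hAeq hx01 hz 0 2 3 1 ⟨![3,2,0,1],![2,3,1,0],by decide,by decide⟩
        (by decide) (by decide) (by decide) (by decide) (by decide) k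
        (by rw [hk]; exact h) (Or.inl rfl)
    · exact constr1 A x hAeq hx01 hz 0 3 1 2 ⟨![3,1,2,0],![3,1,2,0],by decide,by decide⟩
        (by decide) (by decide) (by decide) (by decide) (by decide) k
        (by rw [hk]; exact h) (Or.inl rfl)
    · exact constr1 A x hAeq hx01 hz 0 3 2 1 ⟨![3,2,1,0],![3,2,1,0],by decide,by decide⟩
        (by decide) (by decide) (by decide) (by decide) (by decide) k
        (by rw [hk]; exact h) (Or.inl rfl)
  · rcases dich (fd (x 1 0)) (fd (x 1 2)) (fd (x 1 3)) (hfd 1 0) (hfd 1 2) (hfd 1 3) with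
      ⟨κ, hκv, hTT⟩ | ⟨F1a, F1b⟩
    · have getk : ∃ k : Fin 3, (k:ℝ)/4 = κ := by
        rcases hκv with rfl | rfl | rfl
        · exact ⟨0, c0⟩
        · exact ⟨1, c1⟩
        · exact ⟨2, c2⟩
      obtain ⟨k, hk⟩ := getk
      rcases hTT with h | h | h | h | h | h
      · exact constr1 A x hAeq hx01 hz 1 0 2 3 ⟨![0,3,1,2],![0,2,3,1],by decide,by decide⟩
          (by decide) (by decide) (by decide) (by decide) (by decide) k
          (by rw [hk]; exact h) (Or.inr rfl)
      · exact constr1 A x hAeq hx01 hz 1 0 3 2 ⟨![0,3,2,1],![0,3,2,1],by decide,by decide⟩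
          (by decide) (by decide) (by decide) (by decide) (by decide) k
          (by rw [hk]; exact h) (Or.inr rfl)
      · exact constr1 A x hAeq hx01 hz 1 2 0 3 ⟨![1,3,0,2],![2,0,3,1],by decide,by decide⟩
          (by decide) (by decide) (by decide) (by decide) (by decide) k
          (by rw [hk]; exact h) (Or.inr rfl)
      · exact constr1 A x hAeq hx01 hz 1 2 3 0 ⟨![2,3,0,1],![2,3,0,1],by decide,by decide⟩
          (by decide) (by decide) (by decide) (by decide) (by decide) k
          (by rw [hk]; exact h) (Or.inr rfl)
      · exact constr1 A x hAeq hx01 hz 1 3 0 2 ⟨![1,3,2,0],![3,0,2,1],by decide,by decide⟩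
          (by decide) (by decide) (by decide) (by decide) (by decide) k
          (by rw [hk]; exact h) (Or.inr rfl)
      · exact constr1 A x hAeq hx01 hz 1 3 2 0 ⟨![2,3,1,0],![3,2,0,1],by decide,by decide⟩
          (by decide) (by decide) (by decide) (by decide) (by decide) k
          (by rw [hk]; exact h) (Or.inr rfl)
    · exact constr2 A x hAeq hx01 hz pa F0a F0b F1a F1b

theorem segment_and_A_cover (A : Set (EuclideanSpace ℝ (Fin 4))) (hA : MemA 4 A) :
    ∃ k : Fin 3, ∃ g : EuclideanSpace ℝ (Fin 4) → EuclideanSpace ℝ (Fin 4),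
      Isometry g ∧ g '' unitCube = unitCube ∧
      ∃ P : Fin 8 → Set (EuclideanSpace ℝ (Fin 4)),
        (∀ i, IsBoxP 4 (P i)) ∧
        A ∪ g '' segment ℝ (pt (1/4) ((k : ℝ)/4)) (pt (3/4) ((k : ℝ)/4)) ⊆ ⋃ i, P i := by
  exact segment_and_A_cover' A hA
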